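/- Let d = 3 and define the local rule f : Fin 3 → Fin 3 → Fin 3 → Fin 3 by f x y z = z if y = 0, f x y z = z + 1 (mod 3) if y = 1, and f x y z = −z (mod 3, i.e. 0↦0, 1↦2, 2↦1) if y = 2 (the 3-state CA rule 120021210120021210120021210). Then for every odd n ≥ 3, the global map F of the n-cell periodic-boundary CA is bijective. -/
import Mathlib


def f12 : Fin 3 → Fin 3 → Fin 3 → Fin 3 :=
  fun _ y z => if y = 0 then z else if y = 1 then z + 1 else -z

theorem stmt_12 (n : ℕ) (hn : 3 ≤ n) (hodd : Odd n) :
    Function.Bijective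
      (fun (c : ZMod n → Fin 3) (i : ZMod n) => f12 (c (i - 1)) (c i) (c (i + 1))) := by
  haveI : NeZero n := ⟨by omega⟩
  rw [← Finite.injective_iff_bijective]
  intro c c' h
  by_contra hne
  have hF : ∀ i : ZMod n, f12 (c (i-1)) (c i) (c (i+1)) = f12 (c' (i-1)) (c' i) (c' (i+1)) :=
    fun i => congrFun h i
  have key : ∀ (a b y z z' : Fin 3), f12 a y z = f12 b y z' → z = z' := by decide
  have prop : ∀ i : ZMod n, c i = c' i → c (i+1) = c' (i+1) := by
    intro i hi
    have e := hF i
    rw [← hi] at e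
    exact key _ _ _ _ _ e
  have hAll : ∀ i : ZMod n, c i ≠ c' i := by
    intro i hi
    apply hne
    have hk : ∀ k : ℕ, c (i + (k : ZMod n)) = c' (i + (k : ZMod n)) := by
      intro k
      induction k with
      | zero => simpa using hi
      | succ m ih =>
        have e := prop (i + (m : ZMod n)) ih
        have : i + ((m + 1 : ℕ) : ZMod n) = (i + (m : ZMod n)) + 1 := by push_cast; ring
        rw [this]; exact e
    funext j
    have hj : i + (((j - i).val : ℕ) : ZMod n) = j := by
      rw [ZMod.natCast_val, ZMod.cast_id]; ring
    rw [← hj]; exact hk _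
  have hnEven : ¬ Even n := Nat.not_even_iff_odd.mpr hodd
  by_cases hA : ∃ i : ZMod n, (c i = 0 ∧ c' i = 1) ∨ (c i = 1 ∧ c' i = 0)
  · -- backward deterministic alternation case
    obtain ⟨i, hi⟩ := hA
    have B1 : ∀ (a b y y' : Fin 3), f12 a y 0 = f12 b y' 1 → y = 1 ∧ y' = 0 := by decide
    have B2 : ∀ (a b y y' : Fin 3), f12 a y 1 = f12 b y' 0 → y = 0 ∧ y' = 1 := by decide
    have back01 : ∀ j : ZMod n, c j = 0 → c' j = 1 → c (j-1) = 1 ∧ c' (j-1) = 0 := by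
      intro j h1 h2
      have e := hF (j - 1)
      rw [sub_add_cancel, h1, h2] at e
      exact B1 _ _ _ _ e
    have back10 : ∀ j : ZMod n, c j = 1 → c' j = 0 → c (j-1) = 0 ∧ c' (j-1) = 1 := by
      intro j h1 h2
      have e := hF (j - 1)
      rw [sub_add_cancel, h1, h2] at e
      exact B2 _ _ _ _ e
    have alt : ∀ k : ℕ,
        (Even k → (c (i - (k : ZMod n)) = c i ∧ c' (i - (k : ZMod n)) = c' i)) ∧
        (¬ Even k → (c (i - (k : ZMod n)) = c' i ∧ c' (i - (k : ZMod n)) = c i)) := by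
      intro k
      induction k with
      | zero => simp
      | succ m ih =>
        have hstep : i - ((m + 1 : ℕ) : ZMod n) = (i - (m : ZMod n)) - 1 := by
          push_cast; ring
        rw [hstep]
        by_cases hm : Even m
        · obtain ⟨h1, h2⟩ := ih.1 hm
          constructor
          · intro hcon; exact absurd (Nat.even_add_one.mp hcon) (not_not.mpr hm)
          · intro _
            rcases hi with ⟨p1, p2⟩ | ⟨p1, p2⟩
            · have := back01 (i - (m : ZMod n)) (h1.trans p1) (h2.trans p2)
              rw [p1, p2]; exact ⟨this.1, this.2⟩
            · have := back10 (i - (m : ZMod n)) (h1.trans p1) (h2.trans p2)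
              rw [p1, p2]; exact ⟨this.1, this.2⟩
        · obtain ⟨h1, h2⟩ := ih.2 hm
          constructor
          · intro _
            rcases hi with ⟨p1, p2⟩ | ⟨p1, p2⟩
            · have := back10 (i - (m : ZMod n)) (h1.trans p2) (h2.trans p1)
              rw [p1, p2]; exact ⟨this.1, this.2⟩
            · have := back01 (i - (m : ZMod n)) (h1.trans p2) (h2.trans p1)
              rw [p1, p2]; exact ⟨this.1, this.2⟩
          · intro hcon
            exact absurd (Nat.even_add_one.mpr hm) hcon
    have hni : i - ((n : ℕ) : ZMod n) = i := by
      rw [ZMod.natCast_self]; ring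
    have := (alt n).2 hnEven
    rw [hni] at this
    exact hAll i this.1
  · -- four-state bipartite case
    push_neg at hA
    have C1 : ∀ (a b y y' z z' : Fin 3), y ≠ y' → z ≠ z' →
        ¬((y = 0 ∧ y' = 1) ∨ (y = 1 ∧ y' = 0)) →
        ¬((z = 0 ∧ z' = 1) ∨ (z = 1 ∧ z' = 0)) →
        f12 a y z = f12 b y' z' → ((z = 1 ∨ z' = 1) ↔ ¬(y = 1 ∨ y' = 1)) := by decide
    have hA' : ∀ j : ZMod n, ¬((c j = 0 ∧ c' j = 1) ∨ (c j = 1 ∧ c' j = 0)) := by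
      intro j
      rintro (⟨h1, h2⟩ | ⟨h1, h2⟩)
      · exact (hA j).1 h1 h2
      · exact (hA j).2 h1 h2
    have fwd : ∀ j : ZMod n, ((c (j+1) = 1 ∨ c' (j+1) = 1) ↔ ¬(c j = 1 ∨ c' j = 1)) := by
      intro j
      exact C1 _ _ _ _ _ _ (hAll j) (hAll (j+1)) (hA' j) (hA' (j+1)) (hF j)
    have alt : ∀ k : ℕ,
        (Even k → ((c ((0 : ZMod n) + (k : ZMod n)) = 1 ∨ c' ((0 : ZMod n) + (k : ZMod n)) = 1)
          ↔ (c 0 = 1 ∨ c' 0 = 1))) ∧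
        (¬ Even k → ((c ((0 : ZMod n) + (k : ZMod n)) = 1 ∨ c' ((0 : ZMod n) + (k : ZMod n)) = 1)
          ↔ ¬(c 0 = 1 ∨ c' 0 = 1))) := by
      intro k
      induction k with
      | zero => simp
      | succ m ih =>
        have hstep : (0 : ZMod n) + ((m + 1 : ℕ) : ZMod n) = ((0 : ZMod n) + (m : ZMod n)) + 1 := by
          push_cast; ring
        rw [hstep]
        have hf := fwd ((0 : ZMod n) + (m : ZMod n))
        by_cases hm : Even m
        · constructor
          · intro hcon; exact absurd (Nat.even_add_one.mp hcon) (not_not.mpr hm)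
          · intro _
            rw [hf, ih.1 hm]
        · constructor
          · intro _
            rw [hf, ih.2 hm, not_not]
          · intro hcon
            exact absurd (Nat.even_add_one.mpr hm) hcon
    have hn0 : (0 : ZMod n) + ((n : ℕ) : ZMod n) = 0 := by
      rw [ZMod.natCast_self]; ring
    have := (alt n).2 hnEven
    rw [hn0] at this
    by_cases h0 : (c 0 = 1 ∨ c' 0 = 1)
    · exact (this.mp h0) h0
    · exact h0 (this.mpr h0)
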